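/- Let A(t,T) = (2κθ/σ²) · the logarithm of [2γ e^{(γ+κ)(T-t)/2} / ((γ+κ)(e^{γ(T-t)} - 1) + 2γ)] with γ = √(κ² + 2σ²). Then A satisfies ∂A/∂t = κθ B(t,T), where B(t,T) = 2(e^{γ(T-t)} - 1)/((γ+κ)(e^{γ(T-t)} - 1) + 2γ), and A(T,T) = 0. -/

import Mathlib

open Real

theorem A_satisfies_ode (κ θ σ T : ℝ) (hκ : 0 < κ) (hθ : 0 < θ) (hσ : 0 < σ)
    (γ : ℝ) (hγ : γ = Real.sqrt (κ ^ 2 + 2 * σ ^ 2))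
    (A B : ℝ → ℝ)
    (hA : ∀ t, A t = (2 * κ * θ / σ ^ 2) *
        Real.log (2 * γ * Real.exp ((γ + κ) * (T - t) / 2) /
          ((γ + κ) * (Real.exp (γ * (T - t)) - 1) + 2 * γ)))
    (hB : ∀ t, B t = 2 * (Real.exp (γ * (T - t)) - 1) /
        ((γ + κ) * (Real.exp (γ * (T - t)) - 1) + 2 * γ)) :
    A T = 0 ∧ ∀ t, t ≤ T → HasDerivAt A (κ * θ * B t) t := by
  have hsum : (0:ℝ) < κ ^ 2 + 2 * σ ^ 2 := by positivity
  have hγ2 : γ ^ 2 = κ ^ 2 + 2 * σ ^ 2 := by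
    rw [hγ, Real.sq_sqrt hsum.le]
  have hγpos : 0 < γ := by rw [hγ]; exact Real.sqrt_pos.mpr hsum
  have hκγ : κ < γ := by
    refine lt_of_pow_lt_pow_left₀ 2 hγpos.le ?_
    nlinarith
  have hD : ∀ t, 0 < (γ + κ) * (Real.exp (γ * (T - t)) - 1) + 2 * γ := by
    intro t
    nlinarith [Real.exp_pos (γ * (T - t))]
  have hA' : ∀ t, A t = (2 * κ * θ / σ ^ 2) *
      ((γ + κ) * (T - t) / 2 + Real.log (2 * γ)
        - Real.log ((γ + κ) * (Real.exp (γ * (T - t)) - 1) + 2 * γ)) := by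
    intro t
    rw [hA t, Real.log_div (by positivity) (hD t).ne', Real.log_mul (by positivity)
      (Real.exp_pos _).ne', Real.log_exp]
    ring
  constructor
  · rw [hA T, sub_self]
    simp only [mul_zero, zero_div, Real.exp_zero, mul_one, sub_self]
    rw [zero_add, div_self (by positivity : (2:ℝ) * γ ≠ 0), Real.log_one, mul_zero]
  · intro t _
    have hsub : HasDerivAt (fun t : ℝ => T - t) (-1) t := (hasDerivAt_id t).const_sub T
    have hE : HasDerivAt (fun t : ℝ => Real.exp (γ * (T - t)))
        (Real.exp (γ * (T - t)) * (γ * (-1))) t := (hsub.const_mul γ).exp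
    have hDd : HasDerivAt (fun t : ℝ => (γ + κ) * (Real.exp (γ * (T - t)) - 1) + 2 * γ)
        ((γ + κ) * (Real.exp (γ * (T - t)) * (γ * (-1)))) t :=
      ((hE.sub_const 1).const_mul (γ + κ)).add_const (2 * γ)
    have hlogD : HasDerivAt (fun t : ℝ =>
        Real.log ((γ + κ) * (Real.exp (γ * (T - t)) - 1) + 2 * γ))
        ((γ + κ) * (Real.exp (γ * (T - t)) * (γ * (-1))) /
          ((γ + κ) * (Real.exp (γ * (T - t)) - 1) + 2 * γ)) t :=
      hDd.log (hD t).ne'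
    have hlin : HasDerivAt (fun t : ℝ => (γ + κ) * (T - t) / 2 + Real.log (2 * γ))
        ((γ + κ) * (-1) / 2) t :=
      (((hsub.const_mul (γ + κ)).div_const 2).add_const _)
    have h := ((hlin.sub hlogD).const_mul (2 * κ * θ / σ ^ 2))
    have heq : (fun t => (2 * κ * θ / σ ^ 2) *
      ((γ + κ) * (T - t) / 2 + Real.log (2 * γ)
        - Real.log ((γ + κ) * (Real.exp (γ * (T - t)) - 1) + 2 * γ))) = A := by
      funext t; exact (hA' t).symm
    simp only [Pi.sub_apply] at h
    rw [heq] at h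
    refine h.congr_deriv ?_
    rw [hB t]
    have hDt := hD t
    have hσ2 : (σ:ℝ) ^ 2 ≠ 0 := by positivity
    have hs : σ ^ 2 = (γ ^ 2 - κ ^ 2) / 2 := by linarith [hγ2]
    have hne : γ ^ 2 - κ ^ 2 ≠ 0 := by nlinarith
    rw [hs]
    field_simp
    ring
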